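/- The surface-tension integral of the profile: ∫_{−∞}^{∞} W(tanh(z/√2)) dz = √2/3, where W(φ) = (1/4)(φ² − 1)². -/

import Mathlib

open Real MeasureTheory Filter Topology

lemma tanh_eq_exp (x : ℝ) :
    Real.tanh x = (1 - Real.exp (-2 * x)) / (1 + Real.exp (-2 * x)) := by
  rw [Real.tanh_eq_sinh_div_cosh, Real.sinh_eq, Real.cosh_eq]
  have h1 : Real.exp x > 0 := Real.exp_pos x
  have h2 : Real.exp (-x) > 0 := Real.exp_pos (-x)
  have h3 : Real.exp (-2 * x) = Real.exp (-x) / Real.exp x := by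
    rw [← Real.exp_sub]; ring_nf
  rw [h3]
  field_simp

lemma tanh_tendsto_atTop : Tendsto Real.tanh atTop (𝓝 1) := by
  have h : Tendsto (fun x : ℝ => Real.exp (-2 * x)) atTop (𝓝 0) := by
    apply Real.tendsto_exp_atBot.comp
    have h2 : Tendsto (fun x : ℝ => 2 * x) atTop atTop :=
      Tendsto.const_mul_atTop (by norm_num) tendsto_id
    have := tendsto_neg_atTop_atBot.comp h2
    exact this.congr fun x => by simp [Function.comp, mul_comm]
  have : Tendsto (fun x : ℝ => (1 - Real.exp (-2 * x)) / (1 + Real.exp (-2 * x)))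
      atTop (𝓝 ((1 - 0) / (1 + 0))) :=
    ((tendsto_const_nhds.sub h).div (tendsto_const_nhds.add h) (by norm_num))
  simp only [sub_zero, add_zero, div_one] at this
  exact this.congr fun x => (tanh_eq_exp x).symm

lemma tanh_tendsto_atBot : Tendsto Real.tanh atBot (𝓝 (-1)) := by
  have : Tendsto (fun x : ℝ => -Real.tanh (-x)) atBot (𝓝 (-1)) :=
    (tanh_tendsto_atTop.comp tendsto_neg_atBot_atTop).neg
  exact this.congr fun x => by rw [Real.tanh_neg, neg_neg]

lemma tanh_hasDerivAt (x : ℝ) : HasDerivAt Real.tanh (1 - Real.tanh x ^ 2) x := by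
  have hc : Real.cosh x ≠ 0 := (Real.cosh_pos x).ne'
  have h : HasDerivAt (fun y => Real.sinh y / Real.cosh y)
      ((Real.cosh x * Real.cosh x - Real.sinh x * Real.sinh x) / Real.cosh x ^ 2) x :=
    (Real.hasDerivAt_sinh x).div (Real.hasDerivAt_cosh x) hc
  have heq : (Real.cosh x * Real.cosh x - Real.sinh x * Real.sinh x) / Real.cosh x ^ 2
      = 1 - Real.tanh x ^ 2 := by
    rw [Real.tanh_eq_sinh_div_cosh]
    have := Real.cosh_sq_sub_sinh_sq x
    field_simp
  rw [heq] at h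
  exact h.congr_of_eventuallyEq (Eventually.of_forall fun y => Real.tanh_eq_sinh_div_cosh y)

theorem stmt_2 :
    (∫ z : ℝ, (1 / 4) * ((Real.tanh (z / Real.sqrt 2)) ^ 2 - 1) ^ 2) =
      Real.sqrt 2 / 3 := by
  have hs : (0 : ℝ) < Real.sqrt 2 := by positivity
  set s := Real.sqrt 2 with hsdef
  set f' : ℝ → ℝ := fun z => (1 / 4) * ((Real.tanh (z / s)) ^ 2 - 1) ^ 2 with hf'
  set F : ℝ → ℝ := fun z => (s / 4) * (Real.tanh (z / s) - Real.tanh (z / s) ^ 3 / 3) with hFdef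
  have hderiv : ∀ z, HasDerivAt F (f' z) z := by
    intro z
    have h1 : HasDerivAt (fun z : ℝ => z / s) (1 / s) z := by
      simpa using (hasDerivAt_id z).div_const s
    have h2 : HasDerivAt (fun z : ℝ => Real.tanh (z / s))
        ((1 - Real.tanh (z / s) ^ 2) * (1 / s)) z := by
      have := (tanh_hasDerivAt (z / s)).comp z h1; exact this
    have h3 : HasDerivAt (fun z : ℝ => Real.tanh (z / s) ^ 3)
        (3 * Real.tanh (z / s) ^ 2 * ((1 - Real.tanh (z / s) ^ 2) * (1 / s))) z := by
      simpa using h2.fun_pow 3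
    have h4 := (h2.fun_sub (h3.div_const 3)).const_mul (s / 4)
    convert h4 using 1
    · rfl
    · rfl
    have hs0 : s ≠ 0 := hs.ne'
    simp only [hf']
    field_simp
    ring
  have hdiv : Tendsto (fun z : ℝ => z / s) atTop atTop :=
    tendsto_id.atTop_div_const hs
  have hdivb : Tendsto (fun z : ℝ => z / s) atBot atBot :=
    tendsto_id.atBot_div_const hs
  have htop : Tendsto F atTop (𝓝 (s / 6)) := by
    have h := (tanh_tendsto_atTop.comp hdiv)
    have : Tendsto F atTop (𝓝 ((s / 4) * (1 - 1 ^ 3 / 3))) :=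
      (h.sub ((h.pow 3).div_const 3)).const_mul (s / 4)
    convert this using 2
    norm_num
    ring
  have hbot : Tendsto F atBot (𝓝 (-(s / 6))) := by
    have h := (tanh_tendsto_atBot.comp hdivb)
    have : Tendsto F atBot (𝓝 ((s / 4) * (-1 - (-1) ^ 3 / 3))) :=
      (h.sub ((h.pow 3).div_const 3)).const_mul (s / 4)
    convert this using 2
    norm_num
    ring
  have hnn : ∀ z : ℝ, 0 ≤ f' z := fun z => by positivity
  have hIoi : IntegrableOn f' (Set.Ioi 0) := by
    exact integrableOn_Ioi_deriv_of_nonneg' (fun x _ => hderiv x) (fun x _ => hnn x) htop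
  have hIic : IntegrableOn f' (Set.Iic 0) := by
    rw [← (Measure.measurePreserving_neg (volume : Measure ℝ)).integrableOn_comp_preimage
        (Homeomorph.neg ℝ).measurableEmbedding]
    have : (fun z : ℝ => f' (-z)) = f' := by
      funext z
      simp only [hf', neg_div, Real.tanh_neg, neg_sq]
    have hpre : (Neg.neg : ℝ → ℝ) ⁻¹' Set.Iic 0 = Set.Ici 0 := by
      ext x; simp
    simp only [Function.comp_def, this, hpre]
    rw [integrableOn_Ici_iff_integrableOn_Ioi]
    exact hIoi
  have hint : Integrable f' := by
    rw [← integrableOn_univ, ← Set.Iic_union_Ioi (a := (0 : ℝ))]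
    exact hIic.union hIoi
  have := integral_of_hasDerivAt_of_tendsto hderiv hint hbot htop
  rw [hf'] at this
  rw [this]
  ring
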